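/- Let O be a commutative ring, G a finite group, and I a saturated two-sided ideal of O[G]. Then the map sending α ∈ O[G] to left multiplication by α on I induces a well-defined ring isomorphism O[G]/I^⊥ ≅ End_{O[G]}(I), where End_{O[G]}(I) is the ring of endomorphisms of I as a right O[G]-module. Moreover, every homomorphism of right O[G]-modules from I to O[G] has image contained in I, so that End_{O[G]}(I) = Hom_{O[G]}(I, O[G]). -/

import Mathlib

open MonoidAlgebra MulOpposite

/-- The left annihilator `I^⊥ = {β : β·I = 0}` of a right ideal `I` of the
group ring `O[G]`, as an `O`-submodule of `O[G]`. -/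
def leftAnnihilator (O : Type*) [CommRing O] (G : Type*) [Group G]
    (I : Submodule (MonoidAlgebra O G)ᵐᵒᵖ (MonoidAlgebra O G)) :
    Submodule O (MonoidAlgebra O G) where
  carrier := {β | ∀ x ∈ I, β * x = 0}
  add_mem' := by
    intro a b ha hb x hx
    rw [add_mul, ha x hx, hb x hx, add_zero]
  zero_mem' := by
    intro x hx
    rw [zero_mul]
  smul_mem' := by
    intro c a ha x hx
    rw [smul_mul_assoc, ha x hx, smul_zero]

theorem keyLemma (O : Type*) [CommRing O] (G : Type*) [Group G] [Finite G]
    (I : Submodule (MonoidAlgebra O G)ᵐᵒᵖ (MonoidAlgebra O G))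
    (hsat : Module.Projective O (MonoidAlgebra O G ⧸ I))
    (f : I →ₗ[(MonoidAlgebra O G)ᵐᵒᵖ] MonoidAlgebra O G) :
    ∃ a : MonoidAlgebra O G, ∀ x : I, f x = a * (x : MonoidAlgebra O G) := by
  classical
  have : Fintype G := Fintype.ofFinite G
  -- O-linear section of the quotient map
  obtain ⟨s, hs⟩ := Module.projective_lifting_property ((I.mkQ).restrictScalars O)
    (LinearMap.id) (fun q => (I.mkQ_surjective q).imp (fun m h => h))
  have hs' : ∀ q, I.mkQ (s q) = q := fun q => congrArg (fun F => F q) hs ▸ rfl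
  -- the O-linear projection onto I
  have hπmem : ∀ m : MonoidAlgebra O G, m - s (I.mkQ m) ∈ I := by
    intro m
    have : I.mkQ (m - s (I.mkQ m)) = 0 := by
      rw [map_sub, hs' (I.mkQ m), sub_self]
    rwa [Submodule.mkQ_apply, Submodule.Quotient.mk_eq_zero] at this
  have hπid : ∀ m : MonoidAlgebra O G, m ∈ I → m - s (I.mkQ m) = m := by
    intro m hm
    rw [show I.mkQ m = 0 by rwa [Submodule.mkQ_apply, Submodule.Quotient.mk_eq_zero],
      map_zero, sub_zero]
  -- the functional φ = t ∘ f ∘ π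
  set φ : MonoidAlgebra O G → O := fun m => (f ⟨m - s (I.mkQ m), hπmem m⟩).coeff (1 : G) with hφ
  have hφadd : ∀ m n, φ (m + n) = φ m + φ n := by
    intro m n
    have h1 : (⟨m + n - s (I.mkQ (m + n)), hπmem _⟩ : I)
        = ⟨m - s (I.mkQ m), hπmem m⟩ + ⟨n - s (I.mkQ n), hπmem n⟩ := by
      apply Subtype.ext
      show m + n - s (I.mkQ (m + n)) = (m - s (I.mkQ m)) + (n - s (I.mkQ n))
      rw [map_add, map_add]
      abel
    simp only [hφ]
    rw [h1, map_add]
    rfl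
  have hφ0 : φ 0 = 0 := by
    have h := hφadd 0 0
    rw [add_zero] at h
    exact (left_eq_add.mp h)
  -- O-homogeneity of φ, via centrality of single 1 c
  have hcent : ∀ (c : O) (m : MonoidAlgebra O G), c • m = m * single 1 c := by
    intro c m
    ext g
    rw [mul_single_apply, coeff_smul_apply, smul_eq_mul]
    simp [mul_comm]
  have hIsmul : ∀ (c : O) (x : I), ((c • (x : MonoidAlgebra O G) = ((op (single 1 c) : (MonoidAlgebra O G)ᵐᵒᵖ) • (x : MonoidAlgebra O G)))) := by
    intro c x
    rw [hcent, op_smul_eq_mul]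
  have hφsmul : ∀ (c : O) (m : MonoidAlgebra O G), φ (c • m) = c * φ m := by
    intro c m
    have h1 : (⟨c • m - s (I.mkQ (c • m)), hπmem _⟩ : I)
        = (op (single 1 c) : (MonoidAlgebra O G)ᵐᵒᵖ) • ⟨m - s (I.mkQ m), hπmem m⟩ := by
      apply Subtype.ext
      have h2 : I.mkQ (c • m) = c • I.mkQ m := map_smul ((I.mkQ).restrictScalars O) c m
      show c • m - s (I.mkQ (c • m)) = _
      rw [h2, map_smul, ← smul_sub, hIsmul c ⟨m - s (I.mkQ m), hπmem m⟩]
      rfl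
    simp only [hφ]
    rw [h1, map_smul, op_smul_eq_mul, mul_single_apply]
    simp [mul_comm]
  -- φ restricted to I is t ∘ f
  have hφI : ∀ (x : MonoidAlgebra O G) (hx : x ∈ I), φ x = (f ⟨x, hx⟩).coeff 1 := by
    intro x hx
    have h1 : (⟨x - s (I.mkQ x), hπmem x⟩ : I) = ⟨x, hx⟩ := Subtype.ext (hπid x hx)
    simp only [hφ]
    rw [h1]
  -- the candidate element a
  set a : MonoidAlgebra O G := ∑ g : G, φ (single g 1) • single g⁻¹ (1 : O) with ha
  -- trace identity: (a * m) 1 = φ m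
  have hdecomp : ∀ m : MonoidAlgebra O G, m = ∑ g : G, (m.coeff g) • single g (1 : O) := by
    intro m
    ext h
    rw [coeff_sum, Finsupp.finset_sum_apply]
    simp [Finsupp.single_apply, Finset.sum_ite_eq']
  have htrace : ∀ m : MonoidAlgebra O G, (a * m).coeff 1 = φ m := by
    intro m
    have hS : ∀ S : Finset G, φ (∑ g ∈ S, (m.coeff g) • single g (1:O))
        = ∑ g ∈ S, m.coeff g * φ (single g 1) := by
      intro S
      induction S using Finset.induction with
      | empty => simpa using hφ0
      | insert _ _ hg ih =>
        rw [Finset.sum_insert hg, Finset.sum_insert hg, hφadd, hφsmul, ih]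
    conv_rhs => rw [hdecomp m]
    rw [hS, ha, Finset.sum_mul, coeff_sum, Finsupp.finset_sum_apply]
    refine Finset.sum_congr rfl (fun g _ => ?_)
    rw [smul_mul_assoc, coeff_smul_apply, single_mul_apply]
    simp [smul_eq_mul]
    ring
  refine ⟨a, fun x => ?_⟩
  ext h
  have key : ∀ (m : MonoidAlgebra O G), m.coeff h = (m * single h⁻¹ (1:O)).coeff 1 := by
    intro m; rw [mul_single_apply]; simp
  rw [key (f x), key (a * x)]
  have hxmul : (x : MonoidAlgebra O G) * single h⁻¹ (1:O)
      = ((op (single h⁻¹ (1:O)) : (MonoidAlgebra O G)ᵐᵒᵖ) • (x : MonoidAlgebra O G)) :=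
    (op_smul_eq_mul _ _).symm
  have hmemx : (x : MonoidAlgebra O G) * single h⁻¹ (1:O) ∈ I := by
    rw [hxmul]; exact I.smul_mem _ x.2
  have h1 : (f x) * single h⁻¹ (1:O) = f ⟨(x : MonoidAlgebra O G) * single h⁻¹ (1:O), hmemx⟩ := by
    have h2 : (⟨(x : MonoidAlgebra O G) * single h⁻¹ (1:O), hmemx⟩ : I)
        = (op (single h⁻¹ (1:O)) : (MonoidAlgebra O G)ᵐᵒᵖ) • x := Subtype.ext (by
          rw [SetLike.val_smul, op_smul_eq_mul])
    rw [h2, map_smul, op_smul_eq_mul]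
  rw [h1, ← hφI _ hmemx, ← htrace, mul_assoc]

open MonoidAlgebra MulOpposite in
/-- Left multiplication as a ring hom `O[G] → End(I)`. -/
noncomputable def lmulEnd (O : Type*) [CommRing O] (G : Type*) [Group G]
    (I : Submodule (MonoidAlgebra O G)ᵐᵒᵖ (MonoidAlgebra O G))
    (h2 : ∀ (a : MonoidAlgebra O G), ∀ x ∈ I, a * x ∈ I) :
    MonoidAlgebra O G →+* Module.End (MonoidAlgebra O G)ᵐᵒᵖ I where
  toFun α :=
    { toFun := fun x => ⟨α * x, h2 α x x.2⟩
      map_add' := fun x y => Subtype.ext (by simp [mul_add])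
      map_smul' := fun c x => Subtype.ext (by
        show α * ((c • x : I) : MonoidAlgebra O G) = ((c • _ : I) : MonoidAlgebra O G)
        rw [SetLike.val_smul, SetLike.val_smul, MulOpposite.smul_eq_mul_unop,
          MulOpposite.smul_eq_mul_unop, mul_assoc]) }
  map_one' := LinearMap.ext fun x => Subtype.ext (one_mul (x : MonoidAlgebra O G))
  map_mul' α β := LinearMap.ext fun x => Subtype.ext (mul_assoc α β (x : MonoidAlgebra O G))
  map_zero' := LinearMap.ext fun x => Subtype.ext (zero_mul (x : MonoidAlgebra O G))
  map_add' α β := LinearMap.ext fun x => Subtype.ext (add_mul α β (x : MonoidAlgebra O G))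


/-- If `I` is a saturated two-sided ideal of the group ring
`O[G]` (a right ideal, stable under left multiplication, with `O[G]/I`
projective over `O`), then `α ↦ (left multiplication by α on I)` is a
surjective ring homomorphism `O[G] → End_{O[G]}(I)` whose kernel is exactly
`I^⊥`, i.e. it induces a ring isomorphism `O[G]/I^⊥ ≅ End_{O[G]}(I)`.
Moreover every right-`O[G]`-module homomorphism `I → O[G]` has image in `I`,
so `End_{O[G]}(I) = Hom_{O[G]}(I, O[G])`. -/
theorem stmt_4 (O : Type*) [CommRing O] (G : Type*) [Group G] [Finite G]
    (I : Submodule (MonoidAlgebra O G)ᵐᵒᵖ (MonoidAlgebra O G))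
    (htwosided : ∀ (a : MonoidAlgebra O G), ∀ x ∈ I, a * x ∈ I)
    (hsat : Module.Projective O (MonoidAlgebra O G ⧸ I)) :
    (∃ e : MonoidAlgebra O G →+* Module.End (MonoidAlgebra O G)ᵐᵒᵖ I,
      (∀ (α : MonoidAlgebra O G) (x : I), (e α x : MonoidAlgebra O G) = α * x) ∧
      Function.Surjective e ∧
      (∀ α : MonoidAlgebra O G, e α = 0 ↔ α ∈ leftAnnihilator O G I)) ∧
    (∀ f : I →ₗ[(MonoidAlgebra O G)ᵐᵒᵖ] MonoidAlgebra O G, ∀ x : I, f x ∈ I) := by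
  constructor
  · refine ⟨lmulEnd O G I htwosided, fun α x => rfl, ?_, ?_⟩
    · -- surjectivity
      intro F
      obtain ⟨a, haF⟩ := keyLemma O G I hsat (I.subtype.comp F)
      refine ⟨a, ?_⟩
      refine LinearMap.ext fun x => Subtype.ext ?_
      show a * (x : MonoidAlgebra O G) = (F x : MonoidAlgebra O G)
      exact (haF x).symm
    · intro α
      constructor
      · intro h x hx
        have h2 := LinearMap.congr_fun h ⟨x, hx⟩
        have h3 := congrArg (Subtype.val) h2
        exact h3
      · intro h
        refine LinearMap.ext fun x => Subtype.ext ?_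
        show α * (x : MonoidAlgebra O G) = ((0 : Module.End (MonoidAlgebra O G)ᵐᵒᵖ I) x : MonoidAlgebra O G)
        rw [h x x.2]
        rfl
  · intro f x
    obtain ⟨a, haf⟩ := keyLemma O G I hsat f
    rw [haf x]
    exact htwosided a x x.2
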